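/- Let n ≥ 2 be an integer, let f be a continuous, not identically zero, positive definite function on ℝ, and let g₁, g₂ be continuous, not identically zero, positive definite functions on ℝ with g₁(x)^n = f(x) and g₂(x)^n = f(x) for all x ∈ ℝ. Then for every connected component E of S_f there exists an integer m with 0 ≤ m ≤ n−1 such that g₂(x) = e^{2πim/n} · g₁(x) for all x ∈ E. -/

import Mathlib

open Complex MeasureTheory Set Pointwise ComplexOrder

noncomputable section

/-- `f : ℝ → ℂ` is positive definite. -/
def IsPosDefFn (f : ℝ → ℂ) : Prop :=
  ∀ (m : ℕ) (x : Fin m → ℝ) (c : Fin m → ℂ),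
    0 ≤ ∑ j, ∑ k, f (x j - x k) * c j * (starRingEnd ℂ) (c k)

/-- `f ∈ PD(ℝ)`: continuous, not identically zero, positive definite. -/
def MemPD (f : ℝ → ℂ) : Prop :=
  Continuous f ∧ (∃ x, f x ≠ 0) ∧ IsPosDefFn f

/-- The essential support `S_f`. -/
def essSupp (f : ℝ → ℂ) : Set ℝ := {x | f x ≠ 0}

/-- `D_n(f) = {g ∈ PD(ℝ) : g^n = f}`. -/
def Dset (n : ℕ) (f : ℝ → ℂ) : Set (ℝ → ℂ) :=
  {g | MemPD g ∧ ∀ x, g x ^ n = f x}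

/-- The set of connected components of `S ⊆ ℝ`. -/
def comps (S : Set ℝ) : Set (Set ℝ) :=
  {C | ∃ x ∈ S, C = connectedComponentIn S x}

theorem roots_differ_by_unit_root_on_components (n : ℕ) (hn : 2 ≤ n)
    (f g₁ g₂ : ℝ → ℂ) (hf : MemPD f) (hg₁ : MemPD g₁) (hg₂ : MemPD g₂)
    (h₁ : ∀ x, g₁ x ^ n = f x) (h₂ : ∀ x, g₂ x ^ n = f x) :
    ∀ E ∈ comps (essSupp f), ∃ m : ℕ, m ≤ n - 1 ∧
      ∀ x ∈ E, g₂ x = Complex.exp (2 * Real.pi * Complex.I * (m : ℂ) / (n : ℂ)) * g₁ x := by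
  rintro E ⟨x₀, hx₀, rfl⟩
  have hn0 : n ≠ 0 := by omega
  have hnC : (n : ℂ) ≠ 0 := Nat.cast_ne_zero.mpr hn0
  -- nonvanishing of g₁ on the essential support
  have hg1ne : ∀ x ∈ essSupp f, g₁ x ≠ 0 := fun x hx => by
    intro h0
    apply hx
    rw [← h₁ x, h0, zero_pow hn0]
  -- the ratio function
  set r : ℝ → ℂ := fun x => g₂ x / g₁ x with hr
  have hrpow : ∀ x ∈ essSupp f, r x ^ n = 1 := fun x hx => by
    simp only [hr, div_pow, h₁, h₂]
    exact div_self hx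
  -- the set of n-th roots of unity is finite
  set T : Set ℂ := {z | z ^ n = 1} with hT
  have hTfin : T.Finite := by
    apply Set.Finite.subset (Polynomial.nthRoots n (1 : ℂ)).toFinset.finite_toSet
    intro z hz
    simp only [Multiset.mem_toFinset, Finset.mem_coe]
    rw [Polynomial.mem_nthRoots (by omega : 0 < n)]
    exact hz
  haveI := hTfin.to_subtype
  -- the ratio is constant on the component
  have hpc : IsPreconnected (connectedComponentIn (essSupp f) x₀) :=
    (isConnected_connectedComponentIn_iff.mpr hx₀).isPreconnected
  have hsub : connectedComponentIn (essSupp f) x₀ ⊆ essSupp f :=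
    connectedComponentIn_subset _ _
  have hcont : ContinuousOn r (connectedComponentIn (essSupp f) x₀) :=
    (hg₂.1.continuousOn.div hg₁.1.continuousOn
      (fun x hx => hg1ne x (hsub hx)))
  have hmaps : Set.MapsTo r (connectedComponentIn (essSupp f) x₀) T :=
    fun x hx => hrpow x (hsub hx)
  have hx₀mem : x₀ ∈ connectedComponentIn (essSupp f) x₀ :=
    mem_connectedComponentIn hx₀
  have hconst : ∀ x ∈ connectedComponentIn (essSupp f) x₀, r x = r x₀ :=
    fun x hx => hpc.constant_of_mapsTo (isDiscrete_iff_discreteTopology.mpr inferInstance) hcont hmaps hx hx₀mem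
  -- identify the constant as a root of unity exp(2πim/n)
  haveI : NeZero n := ⟨hn0⟩
  obtain ⟨m, hmn, hme⟩ :=
    (Complex.isPrimitiveRoot_exp n hn0).eq_pow_of_pow_eq_one (hrpow x₀ hx₀)
  refine ⟨m, by omega, fun x hx => ?_⟩
  have hgx : g₁ x ≠ 0 := hg1ne x (hsub hx)
  have : g₂ x = r x₀ * g₁ x := by
    rw [← hconst x hx, hr]
    field_simp
  rw [this, ← hme, ← Complex.exp_nat_mul]
  congr 1
  ring_nf
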